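/- arXiv:1607.05152 — 2 statements merged into one kernel-verified Lean document; each statement's English description precedes it below -/
import Mathlib

section
/- For real numbers t > 0, α with Re(α) > n+1, and d ≥ 0, the integral (1/2t) ∫_{-∞}^{∞} (4πt)^{-1/2} e^{-s²/4t} · C(α) · sign(s) · (s² - d²)_+^{(α-n-1)/2} · s ds equals (4πt)^{-n/2} e^{-d²/4t} · t^{(α-2)/2} / Γ(α/2), where C(α) = 2^{1-α} π^{(1-n)/2} / (Γ(α/2) Γ((α-n+1)/2)) and (x)_+ denotes the positive part. -/
open Real MeasureTheory

open Set Filter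

private lemma sign_mul_self' (s : ℝ) : Real.sign s * s = |s| := by
  rcases lt_trichotomy s 0 with h | h | h
  · rw [Real.sign_of_neg h, abs_of_neg h]; ring
  · simp [h]
  · rw [Real.sign_of_pos h, abs_of_pos h]; ring

/-- The Gaussian transmutation integral of the Riesz distribution yields the
Euclidean heat kernel times `t^((α-2)/2)/Γ(α/2)`. -/
theorem riesz_gaussian_integral (n : ℕ) (t α d : ℝ) (ht : 0 < t)
    (hα : (n : ℝ) + 1 < α) (hd : 0 ≤ d) :
    (1 / (2 * t)) * ∫ s : ℝ,
        (4 * π * t) ^ (-(1 : ℝ) / 2) * Real.exp (-s ^ 2 / (4 * t)) *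
        (2 ^ (1 - α) * π ^ ((1 - (n : ℝ)) / 2) /
          (Real.Gamma (α / 2) * Real.Gamma ((α - n + 1) / 2))) *
        Real.sign s * (max (s ^ 2 - d ^ 2) 0) ^ ((α - n - 1) / 2) * s
    = (4 * π * t) ^ (-(n : ℝ) / 2) * Real.exp (-d ^ 2 / (4 * t)) *
        t ^ ((α - 2) / 2) / Real.Gamma (α / 2) := by
  have ht4 : (0:ℝ) < 4 * t := by linarith
  set β : ℝ := (α - n - 1) / 2 with hβdef
  have hβ : 0 < β := by rw [hβdef]; linarith
  -- continuity of max-power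
  have hmaxc : Continuous fun x : ℝ => max (x ^ 2 - d ^ 2) 0 ^ β := by
    apply Continuous.rpow_const
    · exact ((continuous_pow 2).sub continuous_const).max continuous_const
    · exact fun x => Or.inr hβ.le
  set F : ℝ → ℝ := fun x => Real.exp (-x ^ 2 / (4 * t)) * max (x ^ 2 - d ^ 2) 0 ^ β * x with hF
  have hFc : Continuous F := by
    rw [hF]
    exact ((Real.continuous_exp.comp (by fun_prop)).mul hmaxc).mul continuous_id
  -- integrability of F on Ici 0
  have hFint : IntegrableOn F (Ici 0) := by
    rw [integrableOn_Ici_iff_integrableOn_Ioi]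
    have hG : Integrable (fun x : ℝ => x ^ (2*β+1) * Real.exp (-(1/(4*t)) * x^2)) :=
      integrable_rpow_mul_exp_neg_mul_sq (by positivity) (by linarith)
    refine Integrable.mono hG.restrict hFc.aestronglyMeasurable.restrict ?_
    rw [ae_restrict_iff' measurableSet_Ioi]
    refine ae_of_all _ fun x hx => ?_
    have hx0 : (0:ℝ) < x := hx
    have hFnn : 0 ≤ F x := by
      rw [hF]
      have : (0:ℝ) ≤ max (x ^ 2 - d ^ 2) 0 ^ β := Real.rpow_nonneg (le_max_right _ _) _
      positivity
    have hGnn : 0 ≤ x ^ (2*β+1) * Real.exp (-(1/(4*t)) * x^2) := by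
      have : (0:ℝ) ≤ x ^ (2*β+1) := Real.rpow_nonneg hx0.le _
      positivity
    rw [Real.norm_eq_abs, Real.norm_eq_abs, abs_of_nonneg hFnn, abs_of_nonneg hGnn]
    simp only [hF]
    have h1 : max (x ^ 2 - d ^ 2) 0 ^ β ≤ x ^ (2*β) := by
      have e : (x:ℝ) ^ (2*β) = (x ^ 2) ^ β := by
        rw [← Real.rpow_natCast x 2, ← Real.rpow_mul hx0.le]
        norm_num
      rw [e]
      apply Real.rpow_le_rpow (le_max_right _ _) _ hβ.le
      have : (0:ℝ) ≤ d ^ 2 := by positivity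
      exact max_le (by linarith) (by positivity)
    have e2 : x ^ (2*β+1) = x ^ (2*β) * x := by
      rw [Real.rpow_add hx0, Real.rpow_one]
    have e3 : Real.exp (-x ^ 2 / (4*t)) = Real.exp (-(1/(4*t)) * x ^ 2) := by
      congr 1; ring
    rw [e2, e3]
    have hxnn : 0 ≤ Real.exp (-(1/(4*t)) * x ^ 2) := (Real.exp_pos _).le
    calc Real.exp (-(1/(4*t)) * x ^ 2) * max (x ^ 2 - d ^ 2) 0 ^ β * x
        ≤ Real.exp (-(1/(4*t)) * x ^ 2) * x ^ (2*β) * x := by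
          gcongr
      _ = x ^ (2*β) * x * Real.exp (-(1/(4*t)) * x ^ 2) := by ring
  -- substitution setup
  set c0 : ℝ := 2 * t * Real.exp (-d ^ 2 / (4 * t)) with hc0
  set g : ℝ → ℝ := fun u => c0 * (Real.exp (-u) * max (4 * t * u) 0 ^ β) with hg
  set φ : ℝ → ℝ := fun s => (s ^ 2 - d ^ 2) / (4 * t) with hφ
  have hgc : Continuous g := by
    rw [hg]
    apply continuous_const.mul
    apply (Real.continuous_exp.comp continuous_neg).mul
    apply Continuous.rpow_const
    · exact (continuous_const.mul continuous_id).max continuous_const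
    · exact fun x => Or.inr hβ.le
  have hφc : ContinuousOn φ (Ici 0) := by
    apply Continuous.continuousOn
    rw [hφ]; fun_prop
  have hφt : Tendsto φ atTop atTop := by
    rw [hφ]
    simp only [sub_eq_add_neg]
    exact (tendsto_atTop_add_const_right atTop (-d ^ 2) (tendsto_pow_atTop two_ne_zero)).atTop_div_const ht4
  have hφ' : ∀ x ∈ Ioi (0:ℝ), HasDerivWithinAt φ (x / (2 * t)) (Ioi x) x := by
    intro x hx
    have h1 : HasDerivAt φ ((2 * x ^ 1) / (4 * t)) x := by
      rw [hφ]
      exact (((hasDerivAt_pow 2 x)).sub_const (d ^ 2)).div_const (4 * t)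
    have : (2 * x ^ 1) / (4 * t) = x / (2 * t) := by
      field_simp; ring
    rw [this] at h1
    exact h1.hasDerivWithinAt
  have hφ0 : φ 0 ≤ 0 := by
    rw [hφ]
    simp only
    apply div_nonpos_of_nonpos_of_nonneg _ ht4.le
    nlinarith
  have hzero : ∀ u ≤ (0:ℝ), g u = 0 := by
    intro u hu
    rw [hg]
    simp only
    rw [max_eq_right (by nlinarith : 4 * t * u ≤ 0), Real.zero_rpow hβ.ne']
    ring
  have hpt : ∀ s ∈ Ici (0:ℝ), (g ∘ φ) s * (s / (2 * t)) = F s := by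
    intro s _
    simp only [hg, hφ, hF, Function.comp]
    rw [show 4 * t * ((s ^ 2 - d ^ 2) / (4 * t)) = s ^ 2 - d ^ 2 by field_simp]
    rw [show c0 * (Real.exp (-((s ^ 2 - d ^ 2) / (4 * t))) * max (s ^ 2 - d ^ 2) 0 ^ β) * (s / (2 * t))
        = (Real.exp (-d ^ 2 / (4 * t)) * Real.exp (-((s ^ 2 - d ^ 2) / (4 * t)))) * max (s ^ 2 - d ^ 2) 0 ^ β * ((2*t) * (s / (2*t))) by rw [hc0]; ring]
    rw [← Real.exp_add, show -d ^ 2 / (4 * t) + -((s ^ 2 - d ^ 2) / (4 * t)) = -s ^ 2 / (4*t) by field_simp; ring,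
      show (2*t) * (s / (2*t)) = s by field_simp]
  -- integrability of g on image
  have himg : φ '' Ici 0 ⊆ Ici (φ 0) := by
    rintro _ ⟨x, hx, rfl⟩
    simp only [hφ, mem_Ici]
    gcongr
    exact mem_Ici.mp hx
  have hgIoi : IntegrableOn g (Ioi 0) := by
    have base : IntegrableOn (fun u : ℝ => Real.exp (-u) * u ^ ((β + 1) - 1)) (Ioi 0) :=
      Real.GammaIntegral_convergent (by linarith)
    have base' : IntegrableOn (fun u : ℝ => (c0 * (4 * t) ^ β) * (Real.exp (-u) * u ^ ((β + 1) - 1))) (Ioi 0) :=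
      base.const_mul _
    apply base'.congr_fun ?_ measurableSet_Ioi
    intro u hu
    have hu0 : (0:ℝ) < u := hu
    rw [hg]
    simp only [add_sub_cancel_right]
    rw [max_eq_left (by positivity : (0:ℝ) ≤ 4 * t * u), Real.mul_rpow ht4.le hu0.le]
    ring
  have hg1 : IntegrableOn g (φ '' Ici 0) := by
    apply IntegrableOn.mono_set _ himg
    have : Ici (φ 0) = Icc (φ 0) 0 ∪ Ioi 0 := (Icc_union_Ioi_eq_Ici hφ0).symm
    rw [this]
    exact (hgc.integrableOn_Icc).union hgIoi
  have hgcont : ContinuousOn g (φ '' Ioi 0) := hgc.continuousOn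
  have hg2 : IntegrableOn (fun s => (g ∘ φ) s * (s / (2 * t))) (Ici 0) :=
    hFint.congr_fun (fun s hs => (hpt s hs).symm) measurableSet_Ici
  have hsub : ∫ x in Ioi (0:ℝ), F x = ∫ u in Ioi (φ 0), g u := by
    rw [← integral_comp_mul_deriv_Ioi hφc hφt hφ' hgcont hg1 hg2]
    exact setIntegral_congr_fun measurableSet_Ioi fun x hx => (hpt x (Ioi_subset_Ici_self hx)).symm
  have hshift : ∫ u in Ioi (φ 0), g u = ∫ u in Ioi (0:ℝ), g u := by
    have h1 : ∫ u in Ioi (φ 0), g u = ∫ u in Ioi (φ 0), (Ioi (0:ℝ)).indicator g u := by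
      refine setIntegral_congr_fun measurableSet_Ioi fun u _ => ?_
      by_cases h : 0 < u
      · rw [indicator_of_mem (mem_Ioi.mpr h)]
      · rw [indicator_of_notMem (by simpa using h), hzero u (le_of_not_gt h)]
    rw [h1, setIntegral_indicator measurableSet_Ioi, Ioi_inter_Ioi, sup_eq_right.mpr hφ0]
  have hGam : ∫ u in Ioi (0:ℝ), g u = c0 * ((4 * t) ^ β * Real.Gamma (β + 1)) := by
    have h1 : ∫ u in Ioi (0:ℝ), g u
        = ∫ u in Ioi (0:ℝ), (c0 * (4 * t) ^ β) * (Real.exp (-u) * u ^ ((β + 1) - 1)) := by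
      refine setIntegral_congr_fun measurableSet_Ioi fun u hu => ?_
      have hu0 : (0:ℝ) < u := hu
      rw [hg]
      simp only [add_sub_cancel_right]
      rw [max_eq_left (by positivity : (0:ℝ) ≤ 4 * t * u), Real.mul_rpow ht4.le hu0.le]
      ring
    rw [h1, integral_const_mul, ← Real.Gamma_eq_integral (by linarith : (0:ℝ) < β + 1)]
    ring
  -- arithmetic
  have h4πt : (0:ℝ) < 4 * π * t := by positivity
  have hπ := Real.pi_pos
  have hlog1 : Real.log (4 * π * t) = 2 * Real.log 2 + Real.log π + Real.log t := by
    rw [show (4:ℝ) * π * t = 2 * 2 * π * t by norm_num,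
      Real.log_mul (by positivity) ht.ne', Real.log_mul (by positivity) Real.pi_ne_zero,
      Real.log_mul two_ne_zero two_ne_zero]
    ring
  have hlog2 : Real.log (4 * t) = 2 * Real.log 2 + Real.log t := by
    rw [show (4:ℝ) * t = 2 * 2 * t by norm_num,
      Real.log_mul (by positivity) ht.ne', Real.log_mul two_ne_zero two_ne_zero]
    ring
  have harith : (4 * π * t) ^ (-(1:ℝ)/2) * 2 ^ (2 - α) * π ^ ((1 - (n:ℝ))/2) * (4*t) ^ β
      = (4 * π * t) ^ (-(n:ℝ)/2) * t ^ ((α - 2)/2) := by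
    rw [Real.rpow_def_of_pos h4πt, Real.rpow_def_of_pos h4πt, Real.rpow_def_of_pos two_pos,
      Real.rpow_def_of_pos Real.pi_pos, Real.rpow_def_of_pos ht4, Real.rpow_def_of_pos ht,
      ← Real.exp_add, ← Real.exp_add, ← Real.exp_add, ← Real.exp_add, Real.exp_eq_exp, hβdef, hlog1, hlog2]
    ring
  set C : ℝ := 2 ^ (1 - α) * π ^ ((1 - (n : ℝ)) / 2) /
      (Real.Gamma (α / 2) * Real.Gamma ((α - n + 1) / 2)) with hC
  set c1 : ℝ := (4 * π * t) ^ (-(1 : ℝ) / 2) with hc1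
  have key : ∀ s : ℝ, c1 * Real.exp (-s ^ 2 / (4 * t)) * C * Real.sign s *
      max (s ^ 2 - d ^ 2) 0 ^ β * s = c1 * C * F |s| := by
    intro s
    simp only [hF, sq_abs]
    rw [show c1 * Real.exp (-s ^ 2 / (4 * t)) * C * Real.sign s * max (s ^ 2 - d ^ 2) 0 ^ β * s
      = c1 * C * (Real.exp (-s ^ 2 / (4 * t)) * max (s ^ 2 - d ^ 2) 0 ^ β * (Real.sign s * s)) by
        ring, sign_mul_self']
  simp_rw [key]
  rw [integral_const_mul, integral_comp_abs (f := F), hsub, hshift, hGam,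
    show β + 1 = (α - (n:ℝ) + 1) / 2 by rw [hβdef]; ring]
  have hGα : 0 < Real.Gamma (α / 2) := Real.Gamma_pos_of_pos (by linarith)
  have hGν : 0 < Real.Gamma ((α - (n:ℝ) + 1) / 2) := Real.Gamma_pos_of_pos (by linarith)
  have h2 : (2:ℝ) ^ (2 - α) = 2 ^ (1 - α) * 2 := by
    rw [show (2:ℝ) - α = (1 - α) + 1 by ring, Real.rpow_add_one two_ne_zero]
  rw [hc1] at harith
  rw [hc0, hc1, hC]
  rw [h2] at harith
  rw [show (4 * π * t) ^ (-(n:ℝ) / 2) * Real.exp (-d ^ 2 / (4 * t)) * t ^ ((α - 2) / 2)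
      = ((4 * π * t) ^ (-(n:ℝ) / 2) * t ^ ((α - 2) / 2)) * Real.exp (-d ^ 2 / (4 * t)) by ring,
    ← harith]
  field_simp
end

section
/- Let A be a self-adjoint operator on a Hilbert space with spectrum bounded below by ω ∈ ℝ. Then for all u, v in the Hilbert space and t > 0, ∫_{-∞}^{∞} (4πt)^{-1/2} e^{-s²/4t} ⟨u, g_s'(A) v⟩ ds = ⟨u, e^{-tA} v⟩, where g_s'(λ) = cos(s√λ) for λ ≥ 0 and cosh(s√(-λ)) for λ < 0, and e^{-tA} is defined by functional calculus. -/
open Real MeasureTheory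

/-- The `s`-derivative of the wave function: `g_s'(λ) = cos(s√λ)` for `λ ≥ 0`
and `cosh(s√(-λ))` for `λ < 0`. -/
noncomputable def waveG' (s lam : ℝ) : ℝ :=
  if 0 ≤ lam then Real.cos (s * Real.sqrt lam)
  else Real.cosh (s * Real.sqrt (-lam))

section Scalar

lemma hbre (t : ℝ) (ht : 0 < t) : (-(1/(4*t) : ℂ)).re < 0 := by
  have h : ((1:ℂ)/(4*t)).re = 1/(4*t) := by norm_cast
  simp only [Complex.neg_re, h]
  exact neg_lt_zero.mpr (by positivity)

lemma gauss_cos_key (t : ℝ) (w : ℂ) (s : ℝ) :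
    Complex.exp (-(1/(4*t) : ℂ) * s^2) * Complex.cos (s * w)
      = (Complex.exp (-(1/(4*t) : ℂ) * s^2 + (w * Complex.I) * s + 0)
        + Complex.exp (-(1/(4*t) : ℂ) * s^2 + (-(w * Complex.I)) * s + 0)) / 2 := by
  rw [Complex.cos]
  rw [add_zero, add_zero, Complex.exp_add, Complex.exp_add]
  rw [show (s:ℂ) * w * Complex.I = w * Complex.I * s by ring,
      show -((s:ℂ) * w) * Complex.I = -(w * Complex.I) * s by ring]
  ring

lemma gauss_cos_integrable (t : ℝ) (ht : 0 < t) (w : ℂ) :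
    Integrable fun s : ℝ => Complex.exp (-(1/(4*t) : ℂ) * s^2) * Complex.cos (s * w) := by
  have hb := hbre t ht
  have hi1 := integrable_cexp_quadratic' hb (w * Complex.I) 0
  have hi2 := integrable_cexp_quadratic' hb (-(w * Complex.I)) 0
  exact ((hi1.add hi2).div_const 2).congr
    (Filter.Eventually.of_forall fun s => (gauss_cos_key t w s).symm)

lemma gauss_cos (t : ℝ) (ht : 0 < t) (w : ℂ) :
    ∫ s : ℝ, Complex.exp (-(1/(4*t) : ℂ) * s^2) * Complex.cos (s * w)
      = (Real.sqrt (4*π*t) : ℂ) * Complex.exp (-t * w^2) := by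
  have hb := hbre t ht
  have ht' : (t:ℂ) ≠ 0 := by exact_mod_cast ht.ne'
  have h1 := integral_cexp_quadratic hb (w * Complex.I) 0
  have h2 := integral_cexp_quadratic hb (-(w * Complex.I)) 0
  have hi1 := integrable_cexp_quadratic' hb (w * Complex.I) 0
  have hi2 := integrable_cexp_quadratic' hb (-(w * Complex.I)) 0
  simp_rw [gauss_cos_key t w]
  rw [integral_div, integral_add hi1 hi2, h1, h2]
  have hsq : (w * Complex.I)^2 = -w^2 := by
    rw [mul_pow, Complex.I_sq]; ring
  have hsq2 : (-(w * Complex.I))^2 = -w^2 := by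
    rw [neg_pow, mul_pow, Complex.I_sq]; ring
  rw [hsq, hsq2]
  have hpow : ((π : ℂ) / - -(1/(4*t) : ℂ)) ^ (1/2 : ℂ) = (Real.sqrt (4*π*t) : ℂ) := by
    have h4t : ((π : ℂ) / - -(1/(4*t) : ℂ)) = ((4*π*t : ℝ) : ℂ) := by
      push_cast
      field_simp
    rw [h4t, show ((1:ℂ)/2) = ((1/2 : ℝ) : ℂ) by norm_num,
      ← Complex.ofReal_cpow (by positivity) (1/2 : ℝ), Real.sqrt_eq_rpow]
  rw [hpow]
  have harg : (0 : ℂ) - (-w^2)/(4 * -(1/(4*t) : ℂ)) = -t * w^2 := by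
    field_simp
    ring
  rw [harg]
  ring

/-- A complex square root of `lam`. -/
noncomputable def wsqrt (lam : ℝ) : ℂ :=
  if 0 ≤ lam then (Real.sqrt lam : ℂ) else (Real.sqrt (-lam) : ℂ) * Complex.I

lemma wsqrt_sq (lam : ℝ) : (wsqrt lam)^2 = (lam : ℂ) := by
  unfold wsqrt
  split_ifs with h
  · norm_cast
    exact Real.sq_sqrt h
  · rw [mul_pow, Complex.I_sq]
    rw [show ((Real.sqrt (-lam) : ℂ))^2 = (((Real.sqrt (-lam))^2 : ℝ) : ℂ) by push_cast; ring,
      Real.sq_sqrt (by linarith : 0 ≤ -lam)]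
    push_cast
    ring

lemma waveG'_eq (s lam : ℝ) :
    ((waveG' s lam : ℝ) : ℂ) = Complex.cos (s * wsqrt lam) := by
  unfold waveG' wsqrt
  split_ifs with h
  · rw [show (s:ℂ) * (Real.sqrt lam : ℂ) = ((s * Real.sqrt lam : ℝ) : ℂ) by push_cast; ring,
      Complex.ofReal_cos]
  · rw [show (s:ℂ) * ((Real.sqrt (-lam) : ℂ) * Complex.I)
        = ((s * Real.sqrt (-lam) : ℝ):ℂ) * Complex.I by push_cast; ring,
      Complex.cos_mul_I, Complex.ofReal_cosh]

lemma scalar_integrand_eq (t s lam : ℝ) :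
    ((Real.exp (-s^2/(4*t)) * waveG' s lam : ℝ) : ℂ)
      = Complex.exp (-(1/(4*t) : ℂ) * s^2) * Complex.cos (s * wsqrt lam) := by
  rw [← waveG'_eq]
  push_cast
  congr 1
  rw [show (-(1/(4*t) : ℂ) * s^2) = (-(s:ℂ)^2/(4*t)) by ring]

lemma scalar_int (t : ℝ) (ht : 0 < t) (lam : ℝ) :
    ∫ s : ℝ, ((4*π*t)^(-(1:ℝ)/2) * Real.exp (-s^2/(4*t))) * waveG' s lam
      = Real.exp (-(t*lam)) := by
  have hmain : ∫ s : ℝ, Real.exp (-s^2/(4*t)) * waveG' s lam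
      = Real.sqrt (4*π*t) * Real.exp (-(t*lam)) := by
    have hg := gauss_cos t ht (wsqrt lam)
    have hint := gauss_cos_integrable t ht (wsqrt lam)
    have hre := integral_re (𝕜 := ℂ) hint
    rw [hg] at hre
    have hL : ∀ s : ℝ, RCLike.re (Complex.exp (-(1/(4*t) : ℂ) * s^2)
          * Complex.cos (s * wsqrt lam))
        = Real.exp (-s^2/(4*t)) * waveG' s lam := by
      intro s
      rw [← scalar_integrand_eq]
      simp only [RCLike.re_to_complex, Complex.ofReal_re]
    have hR : ((Real.sqrt (4*π*t) : ℂ) * Complex.exp (-t * (wsqrt lam)^2))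
        = ((Real.sqrt (4*π*t) * Real.exp (-(t*lam)) : ℝ) : ℂ) := by
      rw [wsqrt_sq, show (-(t:ℂ) * lam) = ((-(t*lam) : ℝ) : ℂ) by push_cast; ring,
        ← Complex.ofReal_exp]
      push_cast
      ring
    rw [hR] at hre
    simp_rw [hL] at hre
    rw [hre]
    simp only [RCLike.re_to_complex, Complex.ofReal_re]
  simp_rw [mul_assoc]
  rw [integral_const_mul, hmain]
  rw [Real.sqrt_eq_rpow, show (4*(π*t)) = 4*π*t from by ring, ← mul_assoc,
    ← Real.rpow_add (by positivity)]
  norm_num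

end Scalar

section Bounds

lemma waveG'_continuous : Continuous (fun p : ℝ × ℝ => waveG' p.1 p.2) := by
  unfold waveG'
  apply Continuous.if_le
  · exact Real.continuous_cos.comp (continuous_fst.mul (Real.continuous_sqrt.comp continuous_snd))
  · exact Real.continuous_cosh.comp (continuous_fst.mul
      (Real.continuous_sqrt.comp continuous_snd.neg))
  · exact continuous_const
  · exact continuous_snd
  · rintro ⟨s, lam⟩ h
    simp only at h ⊢
    rw [← h]
    simp

lemma cosh_le_exp_abs (x : ℝ) : Real.cosh x ≤ Real.exp |x| := by
  rw [Real.cosh_eq]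
  have h1 : Real.exp x ≤ Real.exp |x| := Real.exp_le_exp.mpr (le_abs_self x)
  have h2 : Real.exp (-x) ≤ Real.exp |x| := Real.exp_le_exp.mpr (neg_le_abs x)
  linarith

lemma waveG'_bound (s lam R : ℝ) (hR : |lam| ≤ R) :
    |waveG' s lam| ≤ Real.exp (|s| * Real.sqrt R) := by
  have hR0 : 0 ≤ R := le_trans (abs_nonneg _) hR
  unfold waveG'
  split_ifs with h
  · exact le_trans (abs_cos_le_one _) (Real.one_le_exp (by positivity))
  · rw [abs_of_pos (Real.cosh_pos _)]
    calc Real.cosh (s * Real.sqrt (-lam)) ≤ Real.exp |s * Real.sqrt (-lam)| := cosh_le_exp_abs _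
      _ ≤ Real.exp (|s| * Real.sqrt R) := by
          apply Real.exp_le_exp.mpr
          rw [abs_mul, _root_.abs_of_nonneg (Real.sqrt_nonneg _)]
          apply mul_le_mul_of_nonneg_left _ (abs_nonneg s)
          exact Real.sqrt_le_sqrt (by rw [abs_of_neg (not_le.mp h)] at hR; linarith)

end Bounds

/-- Transmutation formula: the heat semigroup of a semibounded self-adjoint
operator is the Gaussian average of the wave group. -/
theorem transmutation_formula {H : Type*} [NormedAddCommGroup H]
    [InnerProductSpace ℂ H] [CompleteSpace H] (A : H →L[ℂ] H)
    (hA : IsSelfAdjoint A) (ω : ℝ) (hspec : spectrum ℝ A ⊆ Set.Ici ω)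
    (u v : H) (t : ℝ) (ht : 0 < t) :
    ∫ s : ℝ, ((4 * π * t) ^ (-(1 : ℝ) / 2) * Real.exp (-s ^ 2 / (4 * t))) •
        (inner ℂ u (cfc (waveG' s) A v) : ℂ)
      = (inner ℂ u (cfc (fun lam : ℝ => Real.exp (-(t * lam))) A v) : ℂ) := by
  rcases subsingleton_or_nontrivial H with hH | hH
  · have hu : u = 0 := Subsingleton.elim _ _
    simp [hu, inner_zero_left]
  -- setup
  set K := spectrum ℝ A with hK
  let ψ := cfcHom (R := ℝ) hA
  have hψc : Continuous ψ := (cfcHom_isClosedEmbedding hA).continuous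
  let Φ : C(K, ℝ) →L[ℝ] ℂ :=
    { toFun := fun f => (inner ℂ u (ψ f v) : ℂ)
      map_add' := fun f g => by
        simp only [map_add, ContinuousLinearMap.add_apply, inner_add_right]
      map_smul' := fun r f => by
        simp only [RingHom.id_apply]
        rw [_root_.map_smul, ContinuousLinearMap.smul_apply, ← algebraMap_smul ℂ r (ψ f v),
          inner_smul_right]
        simp [Complex.real_smul, Algebra.algebraMap_eq_smul_one]
      cont := continuous_const.inner (((ContinuousLinearMap.apply ℂ H) v).continuous.comp hψc) }
  let γ : ℝ → ℝ := fun s => (4 * π * t) ^ (-(1:ℝ)/2) * Real.exp (-s^2/(4*t))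
  have hγc : Continuous γ := by fun_prop
  have hγ0 : ∀ s, 0 ≤ γ s := fun s => by positivity
  let G : C(ℝ × K, ℝ) := ⟨fun p => waveG' p.1 p.2,
    waveG'_continuous.comp (continuous_fst.prodMk (continuous_subtype_val.comp continuous_snd))⟩
  let Gc : C(ℝ, C(K, ℝ)) := G.curry
  let F : ℝ → C(K, ℝ) := fun s => γ s • Gc s
  have hFapp : ∀ (s : ℝ) (x : K), F s x = γ s * waveG' s x := fun s x => rfl
  -- integrability
  have hGnorm : ∀ s : ℝ, ‖Gc s‖ ≤ Real.exp (|s| * Real.sqrt ‖A‖) := by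
    intro s
    refine (ContinuousMap.norm_le _ (by positivity)).mpr fun x => ?_
    exact waveG'_bound s x ‖A‖ (spectrum.norm_le_norm_of_mem x.2)
  have hFc : Continuous F := hγc.smul Gc.continuous
  have hFint : Integrable F := by
    set a := Real.sqrt ‖A‖ with ha
    have ha0 : 0 ≤ a := Real.sqrt_nonneg _
    refine Integrable.mono'
      (g := fun s => ((4 * π * t) ^ (-(1:ℝ)/2) * Real.exp (2*t*a^2))
        * Real.exp (-(1/(8*t)) * s^2))
      (((integrable_exp_neg_mul_sq (by positivity : (0:ℝ) < 1/(8*t))).const_mul _))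
      hFc.aestronglyMeasurable ?_
    refine Filter.Eventually.of_forall fun s => ?_
    show ‖F s‖ ≤ ((4 * π * t) ^ (-(1:ℝ)/2) * Real.exp (2*t*a^2)) * Real.exp (-(1/(8*t)) * s^2)
    have h1 : ‖F s‖ ≤ γ s * Real.exp (|s| * a) := by
      show ‖γ s • Gc s‖ ≤ _
      rw [norm_smul (γ s) (Gc s), Real.norm_eq_abs, _root_.abs_of_nonneg (hγ0 s)]
      exact mul_le_mul_of_nonneg_left (hGnorm s) (hγ0 s)
    refine h1.trans ?_
    have hC : (0:ℝ) ≤ (4 * π * t) ^ (-(1:ℝ)/2) := by positivity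
    calc γ s * Real.exp (|s| * a)
        = (4 * π * t) ^ (-(1:ℝ)/2) * (Real.exp (-s^2/(4*t)) * Real.exp (|s| * a)) := by
          simp only [γ]; ring
      _ ≤ (4 * π * t) ^ (-(1:ℝ)/2) * (Real.exp (2*t*a^2) * Real.exp (-(1/(8*t)) * s^2)) := by
          apply mul_le_mul_of_nonneg_left _ hC
          rw [← Real.exp_add, ← Real.exp_add]
          apply Real.exp_le_exp.mpr
          have hs2 : |s| ^ 2 = s ^ 2 := sq_abs s
          have hk : |s| * a ≤ s ^ 2 / (8 * t) + 2 * t * a ^ 2 := by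
            rw [← sub_nonneg]
            have he : s ^ 2 / (8 * t) + 2 * t * a ^ 2 - |s| * a
                = (|s| - 4 * t * a) ^ 2 / (8 * t) := by
              field_simp
              linear_combination -hs2
            rw [he]
            positivity
          have he2 : -s^2/(4*t) + s^2/(8*t) = -(1/(8*t))*s^2 := by
            field_simp
            ring
          linarith
      _ = ((4 * π * t) ^ (-(1:ℝ)/2) * Real.exp (2*t*a^2)) * Real.exp (-(1/(8*t)) * s^2) := by
          ring
  -- identify integrand with Φ ∘ F
  have hwavecont : ∀ s : ℝ, ContinuousOn (waveG' s) K :=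
    fun s => (waveG'_continuous.comp (Continuous.prodMk_right s)).continuousOn
  have hstep : ∀ s : ℝ, γ s • (inner ℂ u (cfc (waveG' s) A v) : ℂ) = Φ (F s) := by
    intro s
    have hc : cfc (waveG' s) A = ψ (Gc s) := by
      rw [cfc_apply (waveG' s) A hA (hwavecont s)]
      congr 1
    show γ s • (inner ℂ u (cfc (waveG' s) A v) : ℂ) = Φ (γ s • Gc s)
    rw [hc]
    calc γ s • (inner ℂ u ((ψ (Gc s)) v) : ℂ) = γ s • Φ (Gc s) := rfl
      _ = Φ (γ s • Gc s) := (Φ.map_smul _ _).symm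
  rw [show (fun s : ℝ => ((4 * π * t) ^ (-(1 : ℝ) / 2) * Real.exp (-s ^ 2 / (4 * t))) •
      (inner ℂ u (cfc (waveG' s) A v) : ℂ)) = fun s => Φ (F s) from funext hstep]
  rw [ContinuousLinearMap.integral_comp_comm Φ hFint]
  -- compute the integral of F
  have hheatcont : ContinuousOn (fun lam : ℝ => Real.exp (-(t * lam))) K :=
    (Real.continuous_exp.comp (continuous_const.mul continuous_id).neg).continuousOn
  have hFeq : ∫ s, F s = ⟨_, hheatcont.restrict⟩ := by
    ext x
    rw [ContinuousMap.integral_apply hFint]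
    simp_rw [hFapp]
    exact scalar_int t ht x
  rw [hFeq, cfc_apply (fun lam : ℝ => Real.exp (-(t * lam))) A hA hheatcont]
  rfl
end
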